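/- Let M be an abelian group and let F, G, H : (ℤ/2ℤ)^n → M. If the number of triples (x,y,z) ∈ ((ℤ/2ℤ)^n)^3 with x + y + z = 0 and F(x) + G(y) + H(z) = 0 is at least η · 4^n, then the number of additive quadruples of F is at least η^4 · 2^{3n}. -/

import Mathlib

open Finset

section aux
variable {α β γ : Type*}

lemma pair_count [Fintype α] [Fintype β] [DecidableEq γ] (f : α → γ) (g : β → γ)
    (s : Finset γ) (hf : univ.image f ⊆ s) :
    (univ.filter (fun p : α × β => f p.1 = g p.2)).card
      = ∑ c ∈ s, (univ.filter (fun a => f a = c)).card *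
          (univ.filter (fun b => g b = c)).card := by
  rw [Finset.card_eq_sum_card_fiberwise
    (f := fun p : α × β => f p.1) (t := s)
    (fun p _ => hf (mem_image_of_mem f (mem_univ p.1)))]
  refine Finset.sum_congr rfl fun c _ => ?_
  rw [Finset.filter_filter, ← Finset.card_product]
  congr 1
  ext p
  simp only [mem_filter, mem_univ, true_and, mem_product]
  constructor
  · rintro ⟨h1, h2⟩; exact ⟨h2, h2 ▸ h1.symm⟩
  · rintro ⟨h1, h2⟩; exact ⟨h1.trans h2.symm, h1⟩

lemma key_cs [Fintype α] [Fintype β] [DecidableEq γ] (f : α → γ) (g : β → γ) :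
    (((univ.filter fun p : α × β => f p.1 = g p.2).card : ℝ)) ^ 2
      ≤ ((univ.filter fun p : α × α => f p.1 = f p.2).card : ℝ) *
        ((univ.filter fun p : β × β => g p.1 = g p.2).card : ℝ) := by
  set s := univ.image f ∪ univ.image g with hs
  rw [pair_count f g s subset_union_left, pair_count f f s subset_union_left,
    pair_count g g s subset_union_right]
  push_cast
  have := Finset.sum_mul_sq_le_sq_mul_sq s
    (fun c => ((univ.filter fun a => f a = c).card : ℝ))
    (fun c => ((univ.filter fun b => g b = c).card : ℝ))
  simpa [sq] using this

lemma key_conc [Fintype α] [Fintype γ] [DecidableEq γ] (f : α → γ) :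
    ((Fintype.card α : ℝ)) ^ 2
      ≤ (Fintype.card γ : ℝ) *
        ((univ.filter fun p : α × α => f p.1 = f p.2).card : ℝ) := by
  rw [pair_count f f univ (subset_univ _)]
  have h1 : Fintype.card α = ∑ c : γ, (univ.filter fun a => f a = c).card :=
    Finset.card_eq_sum_card_fiberwise (fun a _ => mem_univ (f a))
  rw [h1]
  push_cast
  have := sq_sum_le_card_mul_sum_sq
    (s := (univ : Finset γ)) (f := fun c => ((univ.filter fun a => f a = c).card : ℝ))
  simpa [sq, Finset.card_univ] using this

end aux


theorem aux_main {V M : Type*} [AddCommGroup V] [Fintype V] [DecidableEq V] [AddCommGroup M]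
    (hself : ∀ x : V, x + x = 0) (F G H : V → M) (η : ℝ) (hη : 0 ≤ η)
    (hcount : η * (Fintype.card V : ℝ) ^ 2 ≤
      (Nat.card {p : V × V × V //
        p.1 + p.2.1 + p.2.2 = 0 ∧ F p.1 + G p.2.1 + H p.2.2 = 0} : ℝ)) :
    η ^ 4 * (Fintype.card V : ℝ) ^ 3 ≤
      (Nat.card {q : V × V × V × V //
        q.1 + q.2.1 = q.2.2.1 + q.2.2.2 ∧
          F q.1 + F q.2.1 = F q.2.2.1 + F q.2.2.2} : ℝ) := by
  classical
  have hswap : ∀ a b c d : V, a + b = c + d → a + d = c + b := by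
    intro a b c d h
    have e1 : a + d = (a + b) + (b + d) := by
      rw [show (a+b)+(b+d) = a + d + (b+b) by abel, hself, add_zero]
    rw [e1, h, show (c+d)+(b+d) = c + b + (d+d) by abel, hself, add_zero]
  set A : Finset (V × V) := univ.filter (fun p => F p.1 + G p.2 + H (p.1 + p.2) = 0) with hA
  -- Step 0 : triples count = A.card
  have h0 : (Nat.card {p : V × V × V //
      p.1 + p.2.1 + p.2.2 = 0 ∧ F p.1 + G p.2.1 + H p.2.2 = 0}) = A.card := by
    have hz : ∀ x y z : V, x + y + z = 0 → z = x + y := by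
      intro x y z h
      have e : x + y = (x + y + z) + z := by
        rw [show (x+y+z)+z = x+y+(z+z) by abel, hself, add_zero]
      rw [h, zero_add] at e; exact e.symm
    have e : {p : V × V × V // p.1 + p.2.1 + p.2.2 = 0 ∧ F p.1 + G p.2.1 + H p.2.2 = 0}
        ≃ {p : V × V // p ∈ A} :=
      { toFun := fun t => ⟨(t.1.1, t.1.2.1), by
          obtain ⟨⟨x, y, z⟩, hzz, hF⟩ := t
          simp only [hA, mem_filter, mem_univ, true_and]
          rw [← hz x y z hzz]; exact hF⟩
        invFun := fun p => ⟨(p.1.1, p.1.2, p.1.1 + p.1.2), by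
          obtain ⟨⟨x, y⟩, hp⟩ := p
          simp only [hA, mem_filter, mem_univ, true_and] at hp
          exact ⟨hself (x + y), hp⟩⟩
        left_inv := fun t => by
          obtain ⟨⟨x, y, z⟩, hzz, hF⟩ := t
          apply Subtype.ext
          simpa using (hz x y z hzz).symm
        right_inv := fun p => rfl }
    rw [Nat.card_congr e, Nat.card_eq_fintype_card]
    exact Fintype.card_coe A
  -- Step 2 : concentration
  set Ncard : ℕ := (univ.filter fun q : {p : V × V // p ∈ A} × {p : V × V // p ∈ A} =>
      (q.1.1.1 + q.1.1.2 : V) = q.2.1.1 + q.2.1.2).card with hNcard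
  have h2 : ((A.card : ℝ)) ^ 2 ≤ (Fintype.card V : ℝ) * Ncard := by
    have := key_conc (α := {p : V × V // p ∈ A}) (γ := V)
      (fun p => (p.1.1 + p.1.2 : V))
    rw [Fintype.card_coe] at this
    exact this
  -- the two fiber maps
  set φ : V × V → V × M := fun p => (p.1 + p.2, F p.1 - F p.2) with hφ
  set ψ : V × V → V × M := fun p => (p.1 + p.2, G p.2 - G p.1) with hψ
  set N' : ℕ := (univ.filter fun q : (V × V) × (V × V) => φ q.1 = ψ q.2).card with hN'
  set QF : ℕ := (univ.filter fun q : (V × V) × (V × V) => φ q.1 = φ q.2).card with hQF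
  set QG : ℕ := (univ.filter fun q : (V × V) × (V × V) => ψ q.1 = ψ q.2).card with hQG
  -- Step 3 : Ncard ≤ N'
  have h3 : Ncard ≤ N' := by
    apply Finset.card_le_card_of_injOn
      (fun q => ((q.1.1.1, q.2.1.1), (q.1.1.2, q.2.1.2)))
    · rintro ⟨⟨⟨x, y⟩, hxy⟩, ⟨⟨u, v⟩, huv⟩⟩ hq
      simp only [mem_coe, mem_filter, mem_univ, true_and] at hq ⊢
      simp only [hA, mem_filter, mem_univ, true_and] at hxy huv
      have h1 : x + u = y + v :=
        (hswap x y v u (hq.trans (add_comm u v))).trans (add_comm v y)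
      have hM : F x - F u = G v - G y := by
        rw [sub_eq_sub_iff_add_eq_add]
        have : F x + G y + H (x + y) = F u + G v + H (u + v) := by rw [hxy, huv]
        rw [hq] at this
        have h2' : F x + G y = F u + G v := by
          have := congrArg (fun m => m - H (u + v)) this
          simpa using this
        rw [h2']; exact add_comm (F u) (G v)
      simp only [hφ, hψ, Prod.mk.injEq]
      exact ⟨h1, hM⟩
    · rintro ⟨⟨⟨x, y⟩, hxy⟩, ⟨⟨u, v⟩, huv⟩⟩ - ⟨⟨⟨x', y'⟩, hxy'⟩, ⟨⟨u', v'⟩, huv'⟩⟩ - h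
      simp only [Prod.mk.injEq] at h
      obtain ⟨⟨h1, h2'⟩, h3', h4'⟩ := h
      simp only [Prod.mk.injEq, Subtype.mk.injEq]
      exact ⟨⟨h1, h3'⟩, h2', h4'⟩
  -- Step 4 : Cauchy-Schwarz
  have h4 : ((N' : ℝ)) ^ 2 ≤ (QF : ℝ) * QG := key_cs φ ψ
  -- Step 5 : QG ≤ (card V)^3
  have h5 : (QG : ℝ) ≤ ((Fintype.card V : ℝ)) ^ 3 := by
    have : QG ≤ Fintype.card (V × V × V) := by
      rw [← Finset.card_univ]
      apply Finset.card_le_card_of_injOn (fun q => (q.1.1, q.1.2, q.2.1))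
      · intro q _; exact mem_univ _
      · rintro ⟨⟨y, v⟩, ⟨y', v'⟩⟩ hq ⟨⟨z, w⟩, ⟨z', w'⟩⟩ hq' h
        simp only [mem_coe, mem_filter, mem_univ, true_and, hψ, Prod.mk.injEq] at hq hq' h
        obtain ⟨h1, h2', h3'⟩ := h
        subst h1; subst h2'; subst h3'
        have e1 : y' + v' = y' + w' := by rw [← hq.1, ← hq'.1]
        have : v' = w' := add_left_cancel e1
        simp [this]
    calc (QG : ℝ) ≤ (Fintype.card (V × V × V) : ℝ) := by exact_mod_cast this
      _ = ((Fintype.card V : ℝ)) ^ 3 := by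
        simp [Fintype.card_prod]; ring
  -- Step 6 : QF = target count
  have h6 : (Nat.card {q : V × V × V × V //
      q.1 + q.2.1 = q.2.2.1 + q.2.2.2 ∧ F q.1 + F q.2.1 = F q.2.2.1 + F q.2.2.2}) = QF := by
    have e : {p : (V × V) × (V × V) // φ p.1 = φ p.2} ≃
        {q : V × V × V × V //
          q.1 + q.2.1 = q.2.2.1 + q.2.2.2 ∧ F q.1 + F q.2.1 = F q.2.2.1 + F q.2.2.2} :=
      { toFun := fun p => ⟨(p.1.1.1, p.1.2.2, p.1.1.2, p.1.2.1), by
          obtain ⟨⟨⟨x, u⟩, ⟨v, y⟩⟩, hp⟩ := p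
          simp only [hφ, Prod.mk.injEq] at hp
          obtain ⟨h1, h2'⟩ := hp
          constructor
          · exact (hswap x u v y h1).trans (add_comm v u)
          · rw [sub_eq_sub_iff_add_eq_add] at h2'
            rw [h2']; exact add_comm (F v) (F u)⟩
        invFun := fun q => ⟨((q.1.1, q.1.2.2.1), (q.1.2.2.2, q.1.2.1)), by
          obtain ⟨⟨x, y, u, v⟩, h1, h2'⟩ := q
          simp only [hφ, Prod.mk.injEq]
          constructor
          · exact hswap x y v u (h1.trans (add_comm u v))
          · rw [sub_eq_sub_iff_add_eq_add]
            rw [h2']; exact add_comm (F u) (F v)⟩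
        left_inv := fun p => rfl
        right_inv := fun q => rfl }
    rw [← Nat.card_congr e, Nat.card_eq_fintype_card]
    exact Fintype.card_subtype _
  -- assemble
  rw [h6]
  rw [h0] at hcount
  set c : ℝ := (Fintype.card V : ℝ) with hc
  have hcpos : (0 : ℝ) < c := by
    rw [hc]
    exact_mod_cast Fintype.card_pos_iff.mpr ⟨0⟩
  have hN3 : (Ncard : ℝ) ≤ (N' : ℝ) := by exact_mod_cast h3
  clear hA hNcard hN' hQF hQG hφ hψ hc h3
  clear_value Ncard N' QF QG φ ψ A c
  rw [← mul_le_mul_iff_of_pos_right (show (0 : ℝ) < c ^ 5 by positivity)]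
  calc η ^ 4 * c ^ 3 * c ^ 5 = (η * c ^ 2) ^ 4 := by ring
    _ ≤ ((A.card : ℝ)) ^ 4 := pow_le_pow_left₀ (by positivity) hcount 4
    _ = (((A.card : ℝ)) ^ 2) ^ 2 := by ring
    _ ≤ (c * Ncard) ^ 2 := pow_le_pow_left₀ (sq_nonneg _) h2 2
    _ = c ^ 2 * (Ncard : ℝ) ^ 2 := by ring
    _ ≤ c ^ 2 * (N' : ℝ) ^ 2 := by gcongr
    _ ≤ c ^ 2 * ((QF : ℝ) * QG) := by gcongr
    _ ≤ c ^ 2 * ((QF : ℝ) * c ^ 3) := by gcongr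
    _ = (QF : ℝ) * c ^ 5 := by ring

/-- If `F, G, H : (ℤ/2ℤ)^n → M` satisfy `F(x) + G(y) + H(z) = 0` on at least `η · 4^n` of the
triples with `x + y + z = 0`, then `F` has at least `η⁴ · 2^(3n)` additive quadruples, i.e.
tuples `(x,y,u,v)` with `x + y = u + v` and `F(x) + F(y) = F(u) + F(v)`. -/
theorem test_to_additive_quadruples {n : ℕ} {M : Type*} [AddCommGroup M]
    (F G H : (Fin n → ZMod 2) → M) (η : ℝ) (hη : 0 ≤ η)
    (hcount : η * 4 ^ n ≤
      (Nat.card {p : (Fin n → ZMod 2) × (Fin n → ZMod 2) × (Fin n → ZMod 2) //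
        p.1 + p.2.1 + p.2.2 = 0 ∧ F p.1 + G p.2.1 + H p.2.2 = 0} : ℝ)) :
    η ^ 4 * 2 ^ (3 * n) ≤
      (Nat.card {q : (Fin n → ZMod 2) × (Fin n → ZMod 2) × (Fin n → ZMod 2) × (Fin n → ZMod 2) //
        q.1 + q.2.1 = q.2.2.1 + q.2.2.2 ∧
          F q.1 + F q.2.1 = F q.2.2.1 + F q.2.2.2} : ℝ) := by
  classical
  have hself : ∀ x : Fin n → ZMod 2, x + x = 0 := by
    intro x; funext i
    have h2 : ∀ a : ZMod 2, a + a = 0 := by decide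
    exact h2 (x i)
  have hcard : (Fintype.card (Fin n → ZMod 2) : ℝ) = 2 ^ n := by
    simp
  have h1 : η * 4 ^ n = η * (Fintype.card (Fin n → ZMod 2) : ℝ) ^ 2 := by
    rw [hcard, ← pow_mul, show (4 : ℝ) = 2 ^ 2 by norm_num, ← pow_mul, mul_comm n 2]
  have h2 : (2 : ℝ) ^ (3 * n) = (Fintype.card (Fin n → ZMod 2) : ℝ) ^ 3 := by
    rw [hcard, ← pow_mul, mul_comm n 3]
  rw [h2]
  exact aux_main hself F G H η hη (h1 ▸ hcount)
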